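/- arXiv:2406.00175 — 2 statements merged into one kernel-verified Lean document; each statement's English description precedes it below -/
import Mathlib

section
/- Let ξ₁, ξ₂, X_A, X_B ∈ ℂ*. With S^{(−1)}(ξ₁), S^{(0)}, S^{(1)}(ξ₂) as defined (S^{(m)}(ξ) = [[−ξ^m, i],[i,0]]), T_{21} = T_{43} = [[0, iX_A],[iX_A⁻¹, 0]], and T_{31} = T_{42} = diag(X_B, X_B⁻¹), the matrix M = (S^{(−1)}(ξ₁))⁻¹ T_{31}⁻¹ S^{(0)} T_{43}⁻¹ (S^{(0)})⁻¹ T_{42} S^{(1)}(ξ₂) T_{21} has trace X_B² + X_B⁻² + X_A²X_B⁻² − ξ₂X_A² − ξ₁⁻¹X_A² + ξ₁⁻¹ξ₂ X_A²X_B². -/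
open Complex Matrix

lemma inv2 (A B : Matrix (Fin 2) (Fin 2) ℂ) (h : A * B = 1) : A⁻¹ = B :=
  inv_eq_right_inv h

set_option maxHeartbeats 2000000 in
set_option maxRecDepth 100000 in
/-- Monodromy trace for the q-hypergeometric (resolved conifold) equation. -/
theorem conifold_monodromy_trace (ξ₁ ξ₂ XA XB : ℂ)
    (hξ₁ : ξ₁ ≠ 0) (hξ₂ : ξ₂ ≠ 0) (hA : XA ≠ 0) (hB : XB ≠ 0) :
    let Sm1 : Matrix (Fin 2) (Fin 2) ℂ := !![-(ξ₁⁻¹), I; I, 0]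
    let S0 : Matrix (Fin 2) (Fin 2) ℂ := !![(-1 : ℂ), I; I, 0]
    let S1 : Matrix (Fin 2) (Fin 2) ℂ := !![-ξ₂, I; I, 0]
    let T21 : Matrix (Fin 2) (Fin 2) ℂ := !![0, I * XA; I * XA⁻¹, 0]
    let T43 : Matrix (Fin 2) (Fin 2) ℂ := !![0, I * XA; I * XA⁻¹, 0]
    let T31 : Matrix (Fin 2) (Fin 2) ℂ := !![XB, 0; 0, XB⁻¹]
    let T42 : Matrix (Fin 2) (Fin 2) ℂ := !![XB, 0; 0, XB⁻¹]
    let M := Sm1⁻¹ * T31⁻¹ * S0 * T43⁻¹ * S0⁻¹ * T42 * S1 * T21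
    M.trace = XB ^ 2 + XB⁻¹ ^ 2 + XA ^ 2 * XB⁻¹ ^ 2
      - ξ₂ * XA ^ 2 - ξ₁⁻¹ * XA ^ 2 + ξ₁⁻¹ * ξ₂ * XA ^ 2 * XB ^ 2 := by
  intro Sm1 S0 S1 T21 T43 T31 T42 M
  have hSm1 : Sm1⁻¹ = !![0, -I; -I, -(ξ₁⁻¹)] := by
    apply inv2
    show (!![-(ξ₁⁻¹), I; I, 0] : Matrix (Fin 2) (Fin 2) ℂ) * _ = 1
    ext i j
    fin_cases i <;> fin_cases j <;>
      simp [Matrix.mul_apply, Fin.sum_univ_two, Matrix.one_apply] <;> ring_nf <;>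
      simp [Complex.I_sq]
  have hS0 : S0⁻¹ = !![0, -I; -I, -1] := by
    apply inv2
    show (!![(-1 : ℂ), I; I, 0] : Matrix (Fin 2) (Fin 2) ℂ) * _ = 1
    ext i j
    fin_cases i <;> fin_cases j <;>
      simp [Matrix.mul_apply, Fin.sum_univ_two, Matrix.one_apply] <;> ring_nf <;>
      simp [Complex.I_sq]
  have hT43 : T43⁻¹ = !![0, -I * XA; -I * XA⁻¹, 0] := by
    apply inv2
    show (!![0, I * XA; I * XA⁻¹, 0] : Matrix (Fin 2) (Fin 2) ℂ) * _ = 1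
    ext i j
    fin_cases i <;> fin_cases j <;>
      simp [Matrix.mul_apply, Fin.sum_univ_two, Matrix.one_apply] <;>
      field_simp <;> ring_nf <;> simp [Complex.I_sq] <;> field_simp
  have hT31 : T31⁻¹ = !![XB⁻¹, 0; 0, XB] := by
    apply inv2
    show (!![XB, 0; 0, XB⁻¹] : Matrix (Fin 2) (Fin 2) ℂ) * _ = 1
    ext i j
    fin_cases i <;> fin_cases j <;>
      simp [Matrix.mul_apply, Fin.sum_univ_two, Matrix.one_apply] <;> field_simp
  show (Sm1⁻¹ * T31⁻¹ * S0 * T43⁻¹ * S0⁻¹ * T42 * S1 * T21).trace = _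
  rw [hSm1, hS0, hT43, hT31]
  show (!![0, -I; -I, -(ξ₁⁻¹)] * !![XB⁻¹, 0; 0, XB] * !![(-1 : ℂ), I; I, 0] *
    !![0, -I * XA; -I * XA⁻¹, 0] * !![0, -I; -I, -1] * !![XB, 0; 0, XB⁻¹] *
    !![-ξ₂, I; I, 0] * !![0, I * XA; I * XA⁻¹, 0]).trace = _
  simp only [Matrix.trace_fin_two, Matrix.mul_apply, Fin.sum_univ_two,
    Matrix.cons_val_zero, Matrix.cons_val_one, Matrix.head_cons, Matrix.head_fin_const,
    Matrix.of_apply, Matrix.cons_val', Matrix.cons_val_fin_one, Matrix.empty_val']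
  have h2 : I ^ 2 = -1 := Complex.I_sq
  field_simp
  ring_nf
  have h4 : (I : ℂ) ^ 4 = 1 := by rw [show (4:ℕ) = 2*2 from rfl, pow_mul, Complex.I_sq]; ring
  have h6 : (I : ℂ) ^ 6 = -1 := by rw [show (6:ℕ) = 2*3 from rfl, pow_mul, Complex.I_sq]; ring
  rw [h4, h6]
  ring
end

section
/- Let ξ₁, ξ₂ ∈ ℂ* and Y₂₁, Y₃₁, Y₄₂, Y₄₃ ∈ ℂ*. With S^{(m)}(ξ) = [[−ξ^m, i],[i,0]], T₂₁ = [[0, iY₂₁],[iY₂₁⁻¹,0]], T₄₃ = [[0, iY₄₃],[iY₄₃⁻¹,0]], T₃₁ = diag(Y₃₁, Y₃₁⁻¹), T₄₂ = diag(Y₄₂, Y₄₂⁻¹), the q-Mathieu monodromy M = (S^{(−1)}(ξ₁))⁻¹ T₃₁⁻¹ S^{(0)} T₄₃⁻¹ (S^{(0)})⁻¹ T₄₂ S^{(1)}(ξ₂) T₂₁ has trace equal to (Y₃₁Y₄₂Y₄₃Y₂₁)(ξ₂/ξ₁) + (Y₄₃Y₂₁)/(Y₃₁Y₄₂) + Y₂₁/(Y₃₁Y₄₂Y₄₃)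 + (Y₃₁Y₄₂Y₄₃)/Y₂₁ − (Y₄₂Y₄₃Y₂₁/Y₃₁)·ξ₂ − (Y₃₁Y₄₃Y₂₁/Y₄₂)·ξ₁⁻¹. -/
open Complex Matrix

set_option maxHeartbeats 1600000 in
/-- Monodromy trace of the q-Mathieu (local ℙ¹×ℙ¹) equation in WKB coordinates. -/
theorem qMathieu_monodromy_trace (ξ₁ ξ₂ Y21 Y31 Y42 Y43 : ℂ)
    (hξ₁ : ξ₁ ≠ 0) (hξ₂ : ξ₂ ≠ 0)
    (h21 : Y21 ≠ 0) (h31 : Y31 ≠ 0) (h42 : Y42 ≠ 0) (h43 : Y43 ≠ 0) :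
    let Sm1 : Matrix (Fin 2) (Fin 2) ℂ := !![-(ξ₁⁻¹), I; I, 0]
    let S0 : Matrix (Fin 2) (Fin 2) ℂ := !![(-1 : ℂ), I; I, 0]
    let S1 : Matrix (Fin 2) (Fin 2) ℂ := !![-ξ₂, I; I, 0]
    let T21 : Matrix (Fin 2) (Fin 2) ℂ := !![0, I * Y21; I * Y21⁻¹, 0]
    let T43 : Matrix (Fin 2) (Fin 2) ℂ := !![0, I * Y43; I * Y43⁻¹, 0]
    let T31 : Matrix (Fin 2) (Fin 2) ℂ := !![Y31, 0; 0, Y31⁻¹]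
    let T42 : Matrix (Fin 2) (Fin 2) ℂ := !![Y42, 0; 0, Y42⁻¹]
    let M := Sm1⁻¹ * T31⁻¹ * S0 * T43⁻¹ * S0⁻¹ * T42 * S1 * T21
    M.trace = (Y31 * Y42 * Y43 * Y21) * (ξ₂ / ξ₁)
      + (Y43 * Y21) / (Y31 * Y42) + Y21 / (Y31 * Y42 * Y43)
      + (Y31 * Y42 * Y43) / Y21
      - (Y42 * Y43 * Y21 / Y31) * ξ₂ - (Y31 * Y43 * Y21 / Y42) * ξ₁⁻¹ := by
  intro Sm1 S0 S1 T21 T43 T31 T42 M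
  have hSm1 : Sm1⁻¹ = !![0, -I; -I, -ξ₁⁻¹] := by
    apply inv_eq_right_inv
    ext i j
    fin_cases i <;> fin_cases j <;>
      simp [Sm1, Matrix.mul_apply, Fin.sum_univ_two, Matrix.one_apply] <;>
      field_simp <;> ring_nf <;> simp [I_sq]
  have hS0 : S0⁻¹ = !![0, -I; -I, -1] := by
    apply inv_eq_right_inv
    ext i j
    fin_cases i <;> fin_cases j <;>
      simp [S0, Matrix.mul_apply, Fin.sum_univ_two, Matrix.one_apply] <;>
      field_simp <;> ring_nf <;> simp [I_sq]
  have hT31 : T31⁻¹ = !![Y31⁻¹, 0; 0, Y31] := by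
    apply inv_eq_right_inv
    ext i j
    fin_cases i <;> fin_cases j <;>
      simp [T31, Matrix.mul_apply, Fin.sum_univ_two, Matrix.one_apply,
        mul_inv_cancel₀ h31, inv_mul_cancel₀ h31]
  have hT43 : T43⁻¹ = !![0, -I * Y43; -I * Y43⁻¹, 0] := by
    apply inv_eq_right_inv
    ext i j
    fin_cases i <;> fin_cases j <;>
      simp [T43, Matrix.mul_apply, Fin.sum_univ_two, Matrix.one_apply] <;>
      field_simp <;> ring_nf <;> simp [I_sq]
  have h1 : Sm1⁻¹ * T31⁻¹ = !![0, -(I * Y31); -(I * Y31⁻¹), -(ξ₁⁻¹ * Y31)] := by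
    rw [hSm1, hT31]
    ext i j
    fin_cases i <;> fin_cases j <;>
      simp [Matrix.mul_apply, Fin.sum_univ_two] <;> ring
  have h2 : Sm1⁻¹ * T31⁻¹ * S0 =
      !![Y31, 0; I * (Y31⁻¹ - ξ₁⁻¹ * Y31), Y31⁻¹] := by
    rw [h1]
    ext i j
    fin_cases i <;> fin_cases j <;>
      simp [S0, Matrix.mul_apply, Fin.sum_univ_two] <;>
      ring_nf <;> simp [I_sq] <;> ring
  have h3 : Sm1⁻¹ * T31⁻¹ * S0 * T43⁻¹ =
      !![0, -(I * Y31 * Y43); -(I * Y31⁻¹ * Y43⁻¹),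
          (Y31⁻¹ - ξ₁⁻¹ * Y31) * Y43] := by
    rw [h2, hT43]
    ext i j
    fin_cases i <;> fin_cases j <;>
      simp [Matrix.mul_apply, Fin.sum_univ_two] <;>
      ring_nf <;> simp [I_sq] <;> ring
  have h4 : Sm1⁻¹ * T31⁻¹ * S0 * T43⁻¹ * S0⁻¹ =
      !![-(Y31 * Y43), I * Y31 * Y43;
          -(I * (Y31⁻¹ - ξ₁⁻¹ * Y31) * Y43),
          -(Y31⁻¹ * Y43⁻¹) - (Y31⁻¹ - ξ₁⁻¹ * Y31) * Y43] := by
    rw [h3, hS0]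
    ext i j
    fin_cases i <;> fin_cases j <;>
      simp [Matrix.mul_apply, Fin.sum_univ_two] <;>
      ring_nf <;> simp [I_sq] <;> ring
  have h5 : Sm1⁻¹ * T31⁻¹ * S0 * T43⁻¹ * S0⁻¹ * T42 =
      !![-(Y31 * Y43 * Y42), I * Y31 * Y43 * Y42⁻¹;
          -(I * (Y31⁻¹ - ξ₁⁻¹ * Y31) * Y43 * Y42),
          (-(Y31⁻¹ * Y43⁻¹) - (Y31⁻¹ - ξ₁⁻¹ * Y31) * Y43) * Y42⁻¹] := by
    rw [h4]
    ext i j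
    fin_cases i <;> fin_cases j <;>
      simp [T42, Matrix.mul_apply, Fin.sum_univ_two] <;>
      ring_nf <;> simp [I_sq] <;> ring
  have h6 : Sm1⁻¹ * T31⁻¹ * S0 * T43⁻¹ * S0⁻¹ * T42 * S1 =
      !![Y31 * Y43 * Y42 * ξ₂ - Y31 * Y43 * Y42⁻¹, -(I * Y31 * Y43 * Y42);
          I * ((Y31⁻¹ - ξ₁⁻¹ * Y31) * Y43 * Y42 * ξ₂
            - (Y31⁻¹ * Y43⁻¹ + (Y31⁻¹ - ξ₁⁻¹ * Y31) * Y43) * Y42⁻¹),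
          (Y31⁻¹ - ξ₁⁻¹ * Y31) * Y43 * Y42] := by
    rw [h5]
    ext i j
    fin_cases i <;> fin_cases j <;>
      simp [S1, Matrix.mul_apply, Fin.sum_univ_two] <;>
      ring_nf <;> simp [I_sq] <;> ring
  have hM : M.trace =
      (Y31 * Y43 * Y42 * ξ₂ - Y31 * Y43 * Y42⁻¹) * 0
        + (-(I * Y31 * Y43 * Y42)) * (I * Y21⁻¹)
        + ((I * ((Y31⁻¹ - ξ₁⁻¹ * Y31) * Y43 * Y42 * ξ₂
            - (Y31⁻¹ * Y43⁻¹ + (Y31⁻¹ - ξ₁⁻¹ * Y31) * Y43) * Y42⁻¹)) * (I * Y21)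
          + ((Y31⁻¹ - ξ₁⁻¹ * Y31) * Y43 * Y42) * 0) := by
    show (Sm1⁻¹ * T31⁻¹ * S0 * T43⁻¹ * S0⁻¹ * T42 * S1 * T21).trace = _
    rw [h6]
    simp [T21, Matrix.trace_fin_two, Matrix.mul_apply, Fin.sum_univ_two]
  have hM2 : M.trace = Y31 * Y43 * Y42 * Y21⁻¹
      - ((Y31⁻¹ - ξ₁⁻¹ * Y31) * Y43 * Y42 * ξ₂
        - (Y31⁻¹ * Y43⁻¹ + (Y31⁻¹ - ξ₁⁻¹ * Y31) * Y43) * Y42⁻¹) * Y21 := by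
    rw [hM]
    linear_combination (((Y31⁻¹ - ξ₁⁻¹ * Y31) * Y43 * Y42 * ξ₂
      - (Y31⁻¹ * Y43⁻¹ + (Y31⁻¹ - ξ₁⁻¹ * Y31) * Y43) * Y42⁻¹) * Y21
      - Y31 * Y43 * Y42 * Y21⁻¹) * I_sq
  rw [hM2]
  simp only [div_eq_mul_inv, mul_inv]
  ring
end
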